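/- arXiv:2009.11767 — 2 statements merged into one kernel-verified Lean document; each statement's English description precedes it below -/
import Mathlib

section
/- For 1 ≤ r ≤ n, (1/2^{2n}) · Σ_{j=1}^{r} (1/(2j-1))·C(2j-1, j) · (1/(2n+1-2j))·C(2n+1-2j, n+1-j) = (1/2^{2n+1})·C(2n,n)·(1/(n+1))·(1 + ((2r-n)/n)·C(2r,r)·C(2n-2r,n-r)/C(2n,n)). -/
private lemma cbm (m : ℕ) :
    ((m : ℚ) + 1) * ((2 * m + 2).choose (m + 1) : ℚ)
      = 2 * (2 * (m : ℚ) + 1) * ((2 * m).choose m : ℚ) := by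
  have h := Nat.succ_mul_centralBinom_succ m
  simp only [Nat.centralBinom_eq_two_mul_choose] at h
  have h2 : 2 * (m + 1) = 2 * m + 2 := by ring
  rw [h2] at h
  exact_mod_cast congrArg (fun x : ℕ => (x : ℚ)) h

private lemma halfcb (m : ℕ) :
    ((2 * m + 1).choose (m + 1) : ℚ) = ((2 * m + 2).choose (m + 1) : ℚ) / 2 := by
  have h : (2 * m + 2).choose (m + 1) = (2 * m + 1).choose m + (2 * m + 1).choose (m + 1) :=
    Nat.choose_succ_succ' (2 * m + 1) m
  have hs : (2 * m + 1).choose m = (2 * m + 1).choose (m + 1) := by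
    rw [← Nat.choose_symm (by omega : m + 1 ≤ 2 * m + 1)]
    congr 1
    omega
  rw [hs] at h
  have : ((2 * m + 2).choose (m + 1) : ℚ) = 2 * ((2 * m + 1).choose (m + 1) : ℚ) := by
    rw [h]; push_cast; ring
  linarith

set_option maxHeartbeats 4000000 in
private lemma key_base (m a a' Q : ℚ) (hQ : Q ≠ 0) (d1 : m + 1 ≠ 0) (d2 : 2 * m + 1 ≠ 0)
    (d3 : m + 2 ≠ 0) (ha0 : a' ≠ 0) (Ha : (m + 1) * a' = 2 * (2 * m + 1) * a) :
    1 / Q * (1 / (2 * 1 - 1) * 1 * (1 / (2 * (m + 1) + 1 - 2 * 1)) * (a' / 2))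
      = 1 / (Q * 2) * a' * (1 / (m + 1 + 1)) *
        (1 + (2 * 1 - (m + 1)) / (m + 1) * (2 * a / a')) := by
  have e1 : 2 * (m + 1) + 1 - 2 * (1:ℚ) = 2 * m + 1 := by ring
  have e2 : m + 1 + 1 = m + 2 := by ring
  have e3 : 2 * (1:ℚ) - 1 = 1 := by ring
  rw [e1, e2, e3]
  have ha : a = (m + 1) * a' / (2 * (2 * m + 1)) := by
    rw [eq_div_iff (by intro h; apply d2; linarith [mul_eq_zero.mp h])]
    linarith [Ha]
  subst ha
  field_simp
  ring

set_option maxHeartbeats 4000000 in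
private lemma key_step (r t a a' b b' c Q : ℚ) (hQ : Q ≠ 0) (hc : c ≠ 0)
    (hr1 : r + 1 ≠ 0) (ht1 : t + 1 ≠ 0) (hr2 : 2 * r + 1 ≠ 0) (ht2 : 2 * t + 1 ≠ 0)
    (hn0 : r + 1 + t ≠ 0) (hn1 : r + 1 + t + 1 ≠ 0)
    (Ha : (r + 1) * a' = 2 * (2 * r + 1) * a) (Hb : (t + 1) * b' = 2 * (2 * t + 1) * b) :
    1 / (Q * 2) * c * (1 / (r + 1 + t + 1)) *
        (1 + (2 * r - (r + 1 + t)) / (r + 1 + t) * (a * b' / c))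
      + 1 / Q * (1 / (2 * (r + 1) - 1) * (a' / 2) * (1 / (2 * (r + 1 + t) + 1 - 2 * (r + 1)))
          * (b' / 2))
      = 1 / (Q * 2) * c * (1 / (r + 1 + t + 1)) *
        (1 + (2 * (r + 1) - (r + 1 + t)) / (r + 1 + t) * (a' * b / c)) := by
  have e1 : 2 * (r + 1) - (1:ℚ) = 2 * r + 1 := by ring
  have e2 : 2 * (r + 1 + t) + 1 - 2 * (r + 1) = 2 * t + 1 := by ring
  rw [e1, e2]
  have ha' : a' = 2 * (2 * r + 1) * a / (r + 1) := by field_simp; linarith [Ha]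
  have hb' : b' = 2 * (2 * t + 1) * b / (t + 1) := by field_simp; linarith [Hb]
  subst ha' hb'
  field_simp
  ring

theorem combinatorial_identity (n r : ℕ) (hr : 1 ≤ r) (hrn : r ≤ n) :
    (1 / 2 ^ (2 * n) : ℚ) *
        ∑ j ∈ Finset.Icc 1 r,
          (1 / (2 * (j : ℚ) - 1)) * ((2 * j - 1).choose j : ℚ) *
            (1 / (2 * (n : ℚ) + 1 - 2 * j)) * ((2 * n + 1 - 2 * j).choose (n + 1 - j) : ℚ)
      = (1 / 2 ^ (2 * n + 1)) * ((2 * n).choose n : ℚ) * (1 / ((n : ℚ) + 1)) *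
          (1 + ((2 * (r : ℚ) - n) / n) *
            (((2 * r).choose r : ℚ) * ((2 * n - 2 * r).choose (n - r) : ℚ) /
              ((2 * n).choose n : ℚ))) := by
  induction r, hr using Nat.le_induction with
  | base =>
    obtain ⟨m, rfl⟩ : ∃ m, n = m + 1 := ⟨n - 1, by omega⟩
    rw [show Finset.Icc 1 1 = {1} by rfl, Finset.sum_singleton]
    have h1 : 2 * 1 - 1 = 1 := rfl
    have h2 : 2 * (m + 1) + 1 - 2 * 1 = 2 * m + 1 := by omega
    have h3 : (m + 1) + 1 - 1 = m + 1 := by omega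
    have h4 : 2 * (m + 1) - 2 * 1 = 2 * m := by omega
    have h5 : (m + 1) - 1 = m := by omega
    have h6 : 2 * (m + 1) = 2 * m + 2 := by omega
    have e1 : (Nat.choose 1 1) = 1 := rfl
    have e2 : (Nat.choose (2 * 1) 1) = 2 := rfl
    rw [pow_succ, h1, h2, h3, h4, h5, h6, e1, e2, halfcb m]
    generalize hQ : ((2 : ℚ)) ^ (2 * m + 2) = Q
    have hQ0 : Q ≠ 0 := hQ ▸ (by positivity)
    have ha0 : ((2 * m + 2).choose (m + 1) : ℚ) ≠ 0 := by
      exact_mod_cast (Nat.choose_pos (by omega : m + 1 ≤ 2 * m + 2)).ne'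
    push_cast
    exact key_base (m : ℚ) _ _ Q hQ0 (by positivity) (by positivity) (by positivity) ha0 (cbm m)
  | succ r hr ih =>
    have hrn' : r ≤ n := by omega
    obtain ⟨t, rfl⟩ : ∃ t, n = r + 1 + t := ⟨n - (r + 1), by omega⟩
    rw [Finset.sum_Icc_succ_top (by omega : 1 ≤ r + 1), mul_add, ih hrn']
    have h1 : 2 * (r + 1) - 1 = 2 * r + 1 := by omega
    have h2 : 2 * (r + 1 + t) + 1 - 2 * (r + 1) = 2 * t + 1 := by omega
    have h3 : (r + 1 + t) + 1 - (r + 1) = t + 1 := by omega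
    have h4 : 2 * (r + 1 + t) - 2 * (r + 1) = 2 * t := by omega
    have h5 : (r + 1 + t) - (r + 1) = t := by omega
    have h6 : 2 * (r + 1 + t) - 2 * r = 2 * t + 2 := by omega
    have h7 : (r + 1 + t) - r = t + 1 := by omega
    have h8 : 2 * (r + 1) = 2 * r + 2 := by omega
    rw [pow_succ, h1, h2, h3, h4, h5, h6, h7, h8, halfcb r, halfcb t]
    generalize hQ : ((2 : ℚ)) ^ (2 * (r + 1 + t)) = Q
    have hQ0 : Q ≠ 0 := hQ ▸ (by positivity)
    have hc : ((2 * (r + 1 + t)).choose (r + 1 + t) : ℚ) ≠ 0 := by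
      exact_mod_cast (Nat.choose_pos (by omega : r + 1 + t ≤ 2 * (r + 1 + t))).ne'
    push_cast
    exact key_step (r : ℚ) (t : ℚ) _ _ _ _ _ Q hQ0 hc (by positivity) (by positivity)
      (by positivity) (by positivity) (by positivity) (by positivity) (cbm r) (cbm t)
end

section
/- As N → ∞, the Riemann sums (1/N)·Σ_{N/2 < n < N} 1/((n/N)^{3/2}·(1 - n/N)^{1/2}) converge to ∫_{1/2}^{1} v^{-3/2}(1-v)^{-1/2} dv = 2; equivalently, N·Σ_{N/2 < n < N} 1/(n^{3/2}(N-n)^{1/2}) → 2. -/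
open Real Filter MeasureTheory Finset
set_option maxHeartbeats 2000000


noncomputable def rsFN (N : ℕ) (t : ℝ) : ℝ := (N : ℝ) / (t * Real.sqrt t * Real.sqrt ((N:ℝ) - t))
noncomputable def rsHN (N : ℕ) (t : ℝ) : ℝ := -2 * Real.sqrt ((N:ℝ) - t) / Real.sqrt t

lemma rsFN_nonneg (N : ℕ) (t : ℝ) : 0 ≤ rsFN N t := by
  rcases le_or_gt t 0 with h | h
  · have : Real.sqrt t = 0 := Real.sqrt_eq_zero'.mpr h
    simp [rsFN, this]
  · rw [rsFN]
    have h1 := Real.sqrt_nonneg t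
    have h2 := Real.sqrt_nonneg ((N:ℝ) - t)
    positivity

lemma rsD_sq (N : ℕ) {t : ℝ} (h0 : 0 ≤ t) (hN : t ≤ N) :
    (t * Real.sqrt t * Real.sqrt ((N:ℝ) - t))^2 = t^3 * ((N:ℝ) - t) := by
  have e1 : Real.sqrt t ^ 2 = t := Real.sq_sqrt h0
  have e2 : Real.sqrt ((N:ℝ) - t) ^ 2 = (N:ℝ) - t := Real.sq_sqrt (by linarith)
  have : (t * Real.sqrt t * Real.sqrt ((N:ℝ) - t))^2
      = t^2 * (Real.sqrt t ^2) * (Real.sqrt ((N:ℝ) - t) ^2) := by ring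
  rw [this, e1, e2]; ring

lemma rsD_mono (N : ℕ) {u v : ℝ} (h0 : 0 ≤ u) (huN : u ≤ N) (h0v : 0 ≤ v) (hvN : v ≤ N)
    (hsq : u^3*((N:ℝ)-u) ≤ v^3*((N:ℝ)-v)) :
    u * Real.sqrt u * Real.sqrt ((N:ℝ) - u) ≤ v * Real.sqrt v * Real.sqrt ((N:ℝ) - v) := by
  have hDu : 0 ≤ u * Real.sqrt u * Real.sqrt ((N:ℝ) - u) := by
    have := Real.sqrt_nonneg u; have := Real.sqrt_nonneg ((N:ℝ)-u); positivity
  have hDv : 0 ≤ v * Real.sqrt v * Real.sqrt ((N:ℝ) - v) := by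
    have := Real.sqrt_nonneg v; have := Real.sqrt_nonneg ((N:ℝ)-v); positivity
  rw [← Real.sqrt_sq hDu, ← Real.sqrt_sq hDv]
  apply Real.sqrt_le_sqrt
  rw [rsD_sq N h0 huN, rsD_sq N h0v hvN]
  exact hsq

lemma rsFN_anti (N : ℕ) {u v : ℝ} (h0 : 0 < u) (huv : u ≤ v) (hv : 4 * v ≤ 3 * N) :
    rsFN N v ≤ rsFN N u := by
  have hN0 : (0:ℝ) < N := by nlinarith
  have hvN : v < N := by nlinarith
  have hD : u * Real.sqrt u * Real.sqrt ((N:ℝ) - u) ≤ v * Real.sqrt v * Real.sqrt ((N:ℝ) - v) := by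
    apply rsD_mono N h0.le (by linarith) (by linarith) (by linarith)
    have ha : 0 ≤ (v-u)*((3*(N:ℝ)-4*u)*u^2) :=
      mul_nonneg (by linarith) (mul_nonneg (by linarith) (sq_nonneg u))
    have hb : 0 ≤ (v-u)*((3*(N:ℝ)-4*v)*v^2) :=
      mul_nonneg (by linarith) (mul_nonneg (by linarith) (sq_nonneg v))
    have hc : 0 ≤ (v-u)*((3*(N:ℝ)-2*u-2*v)*(u*v)) :=
      mul_nonneg (by linarith) (mul_nonneg (by linarith) (mul_nonneg h0.le (by linarith)))
    have hd : 0 ≤ (v-u)*((N:ℝ)*(u-v)^2) :=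
      mul_nonneg (by linarith) (mul_nonneg hN0.le (sq_nonneg _))
    nlinarith [ha, hb, hc, hd]
  have hDu : 0 < u * Real.sqrt u * Real.sqrt ((N:ℝ) - u) := by
    have h1 : 0 < Real.sqrt u := Real.sqrt_pos.2 h0
    have h2 : 0 < Real.sqrt ((N:ℝ) - u) := Real.sqrt_pos.2 (by linarith)
    positivity
  rw [rsFN, rsFN]
  gcongr

lemma rsFN_mono (N : ℕ) {u v : ℝ} (h0 : 3 * N ≤ 4 * u) (huv : u ≤ v) (hv : v ≤ (N:ℝ) - 1) :
    rsFN N u ≤ rsFN N v := by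
  have hN0 : (0:ℝ) < N := by nlinarith
  have h0u : 0 < u := by nlinarith
  have hD : v * Real.sqrt v * Real.sqrt ((N:ℝ) - v) ≤ u * Real.sqrt u * Real.sqrt ((N:ℝ) - u) := by
    apply rsD_mono N (by linarith) (by linarith) (by linarith) (by linarith)
    have h1 : 0 ≤ (4*u-3*(N:ℝ))*u^2 := mul_nonneg (by linarith) (sq_nonneg u)
    have h2 : 0 ≤ (4*v-3*(N:ℝ))*v^2 := mul_nonneg (by linarith) (sq_nonneg v)
    have huv9 : (3*(N:ℝ)/4)*(3*(N:ℝ)/4) ≤ u*v := by nlinarith [mul_nonneg (by linarith : (0:ℝ) ≤ u - 3*N/4) (by linarith : (0:ℝ) ≤ v - 3*N/4)]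
    have h3 : 0 ≤ (u*v - (3*(N:ℝ)/4)^2) * (u+v-3*(N:ℝ)/2) := by
      apply mul_nonneg (by nlinarith) (by linarith)
    have h4 : 0 ≤ (N:ℝ)*((9*(N:ℝ)/4 - (u+v-3*(N:ℝ)/2)) * (u+v-3*(N:ℝ)/2)) := by
      apply mul_nonneg hN0.le (mul_nonneg (by linarith) (by linarith))
    have h5 : 0 ≤ (N:ℝ)*(4*(u-3*(N:ℝ)/4)*(v-3*(N:ℝ)/4)) := by
      apply mul_nonneg hN0.le
      apply mul_nonneg (by linarith) (by linarith)
    nlinarith [h1, h2, h3, h4, h5]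
  have hDv : 0 < v * Real.sqrt v * Real.sqrt ((N:ℝ) - v) := by
    have h1 : 0 < Real.sqrt v := Real.sqrt_pos.2 (by linarith)
    have h2 : 0 < Real.sqrt ((N:ℝ) - v) := Real.sqrt_pos.2 (by linarith)
    exact mul_pos (mul_pos (by linarith) h1) h2
  rw [rsFN, rsFN]
  gcongr


lemma rsHN_deriv (N : ℕ) {t : ℝ} (h0 : 0 < t) (hN : t < N) :
    HasDerivAt (rsHN N) (rsFN N t) t := by
  have hst : Real.sqrt t ≠ 0 := by positivity
  have hsNt : Real.sqrt ((N:ℝ) - t) ≠ 0 := by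
    have : (0:ℝ) < (N:ℝ) - t := by linarith
    positivity
  have h1 : HasDerivAt (fun t : ℝ => Real.sqrt ((N:ℝ) - t)) (1 / (2 * Real.sqrt ((N:ℝ)-t)) * (-1)) t := by
    have inner : HasDerivAt (fun t : ℝ => (N:ℝ) - t) (-1) t := by
      simpa using (hasDerivAt_id t).const_sub (N:ℝ)
    exact (Real.hasDerivAt_sqrt (by intro h; exact hsNt (by rw [h, Real.sqrt_zero]))).comp t inner
  have h2 : HasDerivAt Real.sqrt (1 / (2 * Real.sqrt t)) t := Real.hasDerivAt_sqrt (ne_of_gt h0)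
  have h3 := ((h1.const_mul (-2 : ℝ)).div h2 hst)
  refine h3.congr_deriv (Eq.symm ?_)
  have e1 : Real.sqrt t ^ 2 = t := Real.sq_sqrt h0.le
  have e2 : Real.sqrt ((N:ℝ) - t) ^ 2 = (N:ℝ) - t := Real.sq_sqrt (by linarith)
  rw [rsFN]
  field_simp
  linear_combination ((N:ℝ) - t)*e1 + (-t)*e2

lemma rsFN_contOn (N : ℕ) {x y : ℝ} (h0 : 0 < x) (hy : y < N) :
    ContinuousOn (rsFN N) (Set.Icc x y) := by
  apply ContinuousOn.div continuousOn_const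
  · exact (continuousOn_id.mul (Real.continuous_sqrt.continuousOn)).mul
      ((continuous_const.sub continuous_id).sqrt.continuousOn)
  · intro t ht
    rcases ht with ⟨ht1, ht2⟩
    have h1 : 0 < Real.sqrt t := Real.sqrt_pos.2 (lt_of_lt_of_le h0 ht1)
    have h2 : 0 < Real.sqrt ((N:ℝ) - t) := Real.sqrt_pos.2 (by linarith)
    have : 0 < t * Real.sqrt t * Real.sqrt ((N:ℝ) - t) :=
      mul_pos (mul_pos (lt_of_lt_of_le h0 ht1) h1) h2
    exact ne_of_gt this

lemma rs_integral (N : ℕ) {x y : ℝ} (h0 : 0 < x) (hxy : x ≤ y) (hy : y < N) :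
    ∫ t in x..y, rsFN N t = rsHN N y - rsHN N x := by
  apply intervalIntegral.integral_eq_sub_of_hasDerivAt
  · intro t ht
    rw [Set.uIcc_of_le hxy] at ht
    exact rsHN_deriv N (lt_of_lt_of_le h0 ht.1) (lt_of_le_of_lt ht.2 hy)
  · apply ContinuousOn.intervalIntegrable
    rw [Set.uIcc_of_le hxy]
    exact rsFN_contOn N h0 hy


lemma rs_sqrt_atTop : Tendsto Real.sqrt atTop atTop := by
  apply tendsto_atTop_atTop.2
  intro b
  refine ⟨b^2, fun a ha => ?_⟩
  calc b ≤ |b| := le_abs_self b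
  _ = Real.sqrt (b^2) := (Real.sqrt_sq_eq_abs b).symm
  _ ≤ Real.sqrt a := Real.sqrt_le_sqrt ha

lemma rs_div_lim (k d j : ℕ) (hd : 0 < d) :
    Tendsto (fun N : ℕ => ((k * N / d + j : ℕ) : ℝ) / (N:ℝ)) atTop (nhds ((k:ℝ)/d)) := by
  have hd' : (0:ℝ) < d := by exact_mod_cast hd
  apply tendsto_of_tendsto_of_tendsto_of_le_of_le'
    (g := fun N : ℕ => (k:ℝ)/d - 1/N) (h := fun N : ℕ => (k:ℝ)/d + (1+j)/N)
  · have h0 : Tendsto (fun N : ℕ => 1/(N:ℝ)) atTop (nhds 0) := tendsto_one_div_atTop_nhds_zero_nat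
    simpa using tendsto_const_nhds.sub h0
  · have h0 : Tendsto (fun N : ℕ => (1+(j:ℝ))/(N:ℝ)) atTop (nhds 0) :=
      tendsto_const_div_atTop_nhds_zero_nat _
    simpa using tendsto_const_nhds.add h0
  · filter_upwards [eventually_ge_atTop 1] with N hN
    have hN' : (0:ℝ) < N := by exact_mod_cast hN
    have h1 : d * (k*N/d) + (k*N) % d = k*N := Nat.div_add_mod _ _
    have h2 : (k*N) % d < d := Nat.mod_lt _ hd
    have hc1 : (d:ℝ) * ((k*N/d : ℕ):ℝ) + (((k*N)%d : ℕ):ℝ) = (k:ℝ)*N := by exact_mod_cast h1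
    have hm : (((k*N)%d : ℕ):ℝ) < d := by exact_mod_cast h2
    rw [sub_le_iff_le_add, div_add_div _ _ (ne_of_gt hN') (ne_of_gt hN'),
      div_le_div_iff₀ hd' (by positivity)]
    push_cast
    nlinarith [hc1, hm, (Nat.cast_nonneg (k*N/d) : (0:ℝ) ≤ _), (Nat.cast_nonneg j : (0:ℝ) ≤ _),
      mul_nonneg (Nat.cast_nonneg (k*N/d) : (0:ℝ) ≤ _) hN'.le,
      mul_nonneg (Nat.cast_nonneg j : (0:ℝ) ≤ _) hN'.le]
  · filter_upwards [eventually_ge_atTop 1] with N hN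
    have hN' : (0:ℝ) < N := by exact_mod_cast hN
    have h1 : d * (k*N/d) + (k*N) % d = k*N := Nat.div_add_mod _ _
    have hc1 : (d:ℝ) * ((k*N/d : ℕ):ℝ) + (((k*N)%d : ℕ):ℝ) = (k:ℝ)*N := by exact_mod_cast h1
    have hm0 : (0:ℝ) ≤ (((k*N)%d : ℕ):ℝ) := Nat.cast_nonneg _
    rw [div_add_div _ _ (ne_of_gt hd') (ne_of_gt hN'), div_le_div_iff₀ hN' (by positivity)]
    push_cast
    nlinarith [hc1, hm0, mul_nonneg hm0 hN'.le]
  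
lemma rs_sub_one_lim : Tendsto (fun N : ℕ => ((N - 1 : ℕ) : ℝ) / (N:ℝ)) atTop (nhds 1) := by
  have h0 : Tendsto (fun N : ℕ => 1 - 1/(N:ℝ)) atTop (nhds 1) := by
    simpa using tendsto_const_nhds.sub (tendsto_one_div_atTop_nhds_zero_nat (𝕜 := ℝ))
  apply Tendsto.congr' _ h0
  filter_upwards [eventually_ge_atTop 1] with N hN
  have hN' : (0:ℝ) < N := by exact_mod_cast hN
  rw [Nat.cast_sub hN]
  field_simp
  norm_num

lemma rsHN_lim {b : ℕ → ℕ} {β : ℝ} (hβ : 0 < β)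
    (hb : Tendsto (fun N => (b N : ℝ)/(N:ℝ)) atTop (nhds β))
    (hside : ∀ᶠ N in atTop, 0 < b N ∧ b N ≤ N) :
    Tendsto (fun N => rsHN N (b N)) atTop
      (nhds (-2 * Real.sqrt (1-β) / Real.sqrt β)) := by
  have hcont : ContinuousAt (fun u : ℝ => -2 * Real.sqrt (1-u) / Real.sqrt u) β := by
    apply ContinuousAt.div
    · exact (continuous_const.mul ((continuous_const.sub continuous_id).sqrt)).continuousAt
    · exact Real.continuous_sqrt.continuousAt
    · have : 0 < Real.sqrt β := Real.sqrt_pos.2 hβ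
      exact ne_of_gt this
  have hcomp := (hcont.tendsto).comp hb
  apply Tendsto.congr' _ hcomp
  filter_upwards [hside, eventually_ge_atTop 1] with N hN hN1
  obtain ⟨hb0, hbN⟩ := hN
  have hN' : (0:ℝ) < N := by exact_mod_cast hN1
  have hb0' : (0:ℝ) < b N := by exact_mod_cast hb0
  have hbN' : (b N : ℝ) ≤ N := by exact_mod_cast hbN
  have hsN : Real.sqrt (N:ℝ) ≠ 0 := ne_of_gt (Real.sqrt_pos.2 hN')
  have hsb : Real.sqrt (b N : ℝ) ≠ 0 := ne_of_gt (Real.sqrt_pos.2 hb0')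
  show -2 * Real.sqrt (1 - (b N:ℝ)/N) / Real.sqrt ((b N:ℝ)/N) = rsHN N (b N)
  have e1 : 1 - (b N:ℝ)/N = ((N:ℝ) - b N)/N := by field_simp
  rw [e1, Real.sqrt_div (by linarith) , Real.sqrt_div (by linarith), rsHN]
  field_simp

lemma rsFN_bound (N : ℕ) {b : ℝ} (hb : (N:ℝ)/2 ≤ b) (hb2 : (N:ℝ)/8 ≤ (N:ℝ) - b) (hN : 0 < N) :
    rsFN N b ≤ 8 / N := by
  have hN' : (0:ℝ) < N := by exact_mod_cast hN
  have hb0 : 0 < b := by linarith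
  have h1 : Real.sqrt ((N:ℝ)/2) ≤ Real.sqrt b := Real.sqrt_le_sqrt hb
  have h2 : Real.sqrt ((N:ℝ)/8) ≤ Real.sqrt ((N:ℝ)-b) := Real.sqrt_le_sqrt hb2
  have h3 : Real.sqrt ((N:ℝ)/2) * Real.sqrt ((N:ℝ)/8) = (N:ℝ)/4 := by
    rw [← Real.sqrt_mul (by positivity)]
    have e : (N:ℝ)/2 * ((N:ℝ)/8) = ((N:ℝ)/4)^2 := by ring
    rw [e, Real.sqrt_sq (by positivity)]
  have hD : (N:ℝ)^2/8 ≤ b * Real.sqrt b * Real.sqrt ((N:ℝ)-b) := by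
    calc (N:ℝ)^2/8 = (N/2) * ((N:ℝ)/4) := by ring
    _ = ((N:ℝ)/2) * (Real.sqrt ((N:ℝ)/2) * Real.sqrt ((N:ℝ)/8)) := by rw [h3]
    _ ≤ b * (Real.sqrt b * Real.sqrt ((N:ℝ)-b)) := by
        apply mul_le_mul hb (mul_le_mul h1 h2 (Real.sqrt_nonneg _) (Real.sqrt_nonneg _))
          (by positivity) hb0.le
    _ = b * Real.sqrt b * Real.sqrt ((N:ℝ)-b) := by ring
  rw [rsFN, div_le_div_iff₀ (by nlinarith) hN']
  nlinarith [hD]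

lemma rsFN_last (N : ℕ) (hN : 2 ≤ N) :
    rsFN N ((N - 1 : ℕ) : ℝ) ≤ 2 / Real.sqrt ((N:ℝ) - 1) := by
  have hN' : (2:ℝ) ≤ N := by exact_mod_cast hN
  have hcast : ((N-1:ℕ):ℝ) = (N:ℝ) - 1 := by
    rw [Nat.cast_sub (by omega)]; norm_num
  rw [rsFN, hcast]
  have e : (N:ℝ) - ((N:ℝ)-1) = 1 := by ring
  rw [e, Real.sqrt_one, mul_one]
  have hs : 0 < Real.sqrt ((N:ℝ)-1) := Real.sqrt_pos.2 (by linarith)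
  rw [div_le_div_iff₀ (by nlinarith) hs]
  nlinarith [Real.sq_sqrt (by linarith : (0:ℝ) ≤ (N:ℝ)-1), hs]

theorem riemann_sum_tendsto_two :
    Filter.Tendsto
      (fun N : ℕ => (N : ℝ) *
        ∑ n ∈ (Finset.range N).filter (fun n => N < 2 * n),
          1 / ((n : ℝ) * Real.sqrt n * Real.sqrt ((N : ℝ) - n)))
      Filter.atTop (nhds 2) := by
  have hEq : (fun N : ℕ => (N : ℝ) *
        ∑ n ∈ (Finset.range N).filter (fun n => N < 2 * n),
          1 / ((n : ℝ) * Real.sqrt n * Real.sqrt ((N : ℝ) - n)))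
      =ᶠ[atTop] (fun N : ℕ => ∑ n ∈ Finset.Ico (N/2+1) N, rsFN N n) := by
    filter_upwards with N
    rw [Finset.mul_sum]
    have hset : (Finset.range N).filter (fun n => N < 2 * n) = Finset.Ico (N/2+1) N := by
      ext n
      simp only [Finset.mem_filter, Finset.mem_range, Finset.mem_Ico]
      omega
    rw [hset]
    exact Finset.sum_congr rfl (fun n _ => by rw [rsFN, mul_one_div])
  rw [tendsto_congr' hEq]
  set X : ℝ := -2 * Real.sqrt (1-3/4) / Real.sqrt (3/4) with hX
  have h1 : Tendsto (fun N : ℕ => rsHN N ((3*N/4 : ℕ) : ℝ)) atTop (nhds X) := by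
    apply rsHN_lim (by norm_num : (0:ℝ) < 3/4)
    · have := rs_div_lim 3 4 0 (by norm_num)
      simpa using this
    · filter_upwards [eventually_ge_atTop 4] with N hN
      constructor <;> omega
  have h2 : Tendsto (fun N : ℕ => rsHN N ((N/2+1 : ℕ) : ℝ)) atTop
      (nhds (-2 * Real.sqrt (1-1/2) / Real.sqrt (1/2))) := by
    apply rsHN_lim (by norm_num : (0:ℝ) < 1/2)
    · have := rs_div_lim 1 2 1 (by norm_num)
      simpa using this
    · filter_upwards [eventually_ge_atTop 2] with N hN
      constructor <;> omega
  have h3 : Tendsto (fun N : ℕ => rsHN N ((N-1 : ℕ) : ℝ)) atTop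
      (nhds (-2 * Real.sqrt (1-1) / Real.sqrt 1)) := by
    apply rsHN_lim (by norm_num : (0:ℝ) < 1) rs_sub_one_lim
    filter_upwards [eventually_ge_atTop 2] with N hN
    constructor <;> omega
  have h4 : Tendsto (fun N : ℕ => rsHN N ((3*N/4+1 : ℕ) : ℝ)) atTop (nhds X) := by
    apply rsHN_lim (by norm_num : (0:ℝ) < 3/4) (rs_div_lim 3 4 1 (by norm_num))
    filter_upwards [eventually_ge_atTop 4] with N hN
    constructor <;> omega
  have hY : -2 * Real.sqrt (1-1/2) / Real.sqrt (1/2) = -2 := by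
    rw [show (1:ℝ)-1/2 = 1/2 by norm_num, mul_div_assoc,
      div_self (ne_of_gt (Real.sqrt_pos.2 (by norm_num))), mul_one]
  have hZ : -2 * Real.sqrt (1-1) / Real.sqrt 1 = 0 := by
    rw [sub_self, Real.sqrt_zero, mul_zero, zero_div]
  have hLB : Tendsto (fun N : ℕ =>
      (rsHN N ((3*N/4 : ℕ):ℝ) - rsHN N ((N/2+1 : ℕ):ℝ))
      + (rsHN N ((N-1 : ℕ):ℝ) - rsHN N ((3*N/4+1 : ℕ):ℝ))) atTop (nhds 2) := by
    have hh := (h1.sub h2).add (h3.sub h4)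
    rw [hY, hZ] at hh
    convert hh using 2
    ring
  have herr : Tendsto (fun N : ℕ => 8/(N:ℝ) + 8/(N:ℝ) + 2/Real.sqrt ((N:ℝ)-1)) atTop (nhds 0) := by
    have e1 : Tendsto (fun N : ℕ => 8/(N:ℝ)) atTop (nhds 0) :=
      tendsto_const_div_atTop_nhds_zero_nat 8
    have e2 : Tendsto (fun N : ℕ => 2/Real.sqrt ((N:ℝ)-1)) atTop (nhds 0) := by
      apply Tendsto.div_atTop tendsto_const_nhds
      exact rs_sqrt_atTop.comp (tendsto_atTop_add_const_right _ (-1)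
        tendsto_natCast_atTop_atTop)
    simpa using (e1.add e1).add e2
  have hUB : Tendsto (fun N : ℕ =>
      ((rsHN N ((3*N/4 : ℕ):ℝ) - rsHN N ((N/2+1 : ℕ):ℝ))
      + (rsHN N ((N-1 : ℕ):ℝ) - rsHN N ((3*N/4+1 : ℕ):ℝ)))
      + (8/(N:ℝ) + 8/(N:ℝ) + 2/Real.sqrt ((N:ℝ)-1))) atTop (nhds 2) := by
    simpa using hLB.add herr
  have key : ∀ᶠ N : ℕ in atTop,
      ((rsHN N ((3*N/4 : ℕ):ℝ) - rsHN N ((N/2+1 : ℕ):ℝ))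
        + (rsHN N ((N-1 : ℕ):ℝ) - rsHN N ((3*N/4+1 : ℕ):ℝ))
        ≤ ∑ n ∈ Finset.Ico (N/2+1) N, rsFN N n)
      ∧ (∑ n ∈ Finset.Ico (N/2+1) N, rsFN N n
        ≤ ((rsHN N ((3*N/4 : ℕ):ℝ) - rsHN N ((N/2+1 : ℕ):ℝ))
          + (rsHN N ((N-1 : ℕ):ℝ) - rsHN N ((3*N/4+1 : ℕ):ℝ)))
          + (8/(N:ℝ) + 8/(N:ℝ) + 2/Real.sqrt ((N:ℝ)-1))) := by
    filter_upwards [eventually_ge_atTop 16] with N hN16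
    have hac : N/2+1 ≤ 3*N/4 := by omega
    have hacLT : N/2+1 < 3*N/4 := by omega
    have hcN : 3*N/4 ≤ N := by omega
    have hcltN : 3*N/4 < N := by omega
    have hc1N1 : 3*N/4+1 ≤ N-1 := by omega
    have ha2c : N/2+2 ≤ 3*N/4 := by omega
    have hN11 : N-1+1 = N := by omega
    have hcR : ((3*N/4:ℕ):ℝ) ≤ 3*(N:ℝ)/4 := by
      have h := Nat.div_mul_le_self (3*N) 4
      have h' : ((3*N/4*4 : ℕ):ℝ) ≤ ((3*N:ℕ):ℝ) := Nat.cast_le.2 h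
      push_cast at h' ⊢
      linarith
    have hc1R : 3*(N:ℝ) ≤ 4*((3*N/4:ℕ):ℝ) + 4 := by
      have h : 3*N < 4*(3*N/4) + 4 := by omega
      have h' : ((3*N:ℕ):ℝ) < ((4*(3*N/4)+4 : ℕ):ℝ) := Nat.cast_lt.2 h
      push_cast at h' ⊢
      linarith
    have haR : (N:ℝ)/2 ≤ ((N/2+1:ℕ):ℝ) := by
      have h : N ≤ 2*(N/2+1) := by omega
      have h' : ((N:ℕ):ℝ) ≤ ((2*(N/2+1) : ℕ):ℝ) := Nat.cast_le.2 h
      push_cast at h' ⊢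
      linarith
    have haR2 : (N:ℝ)/8 ≤ (N:ℝ) - ((N/2+1:ℕ):ℝ) := by
      have h : 8*(N/2+1) + N ≤ 8*N := by omega
      have h' : ((8*(N/2+1)+N : ℕ):ℝ) ≤ ((8*N : ℕ):ℝ) := Nat.cast_le.2 h
      push_cast at h' ⊢
      linarith
    have hcR1 : (N:ℝ)/2 ≤ ((3*N/4:ℕ):ℝ) := by
      have h : N ≤ 2*(3*N/4) := by omega
      have h' : ((N:ℕ):ℝ) ≤ ((2*(3*N/4) : ℕ):ℝ) := Nat.cast_le.2 h
      push_cast at h' ⊢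
      linarith
    have hcR2 : (N:ℝ)/8 ≤ (N:ℝ) - ((3*N/4:ℕ):ℝ) := by
      have h : 8*(3*N/4) + N ≤ 8*N := by omega
      have h' : ((8*(3*N/4)+N : ℕ):ℝ) ≤ ((8*N : ℕ):ℝ) := Nat.cast_le.2 h
      push_cast at h' ⊢
      linarith
    have hN1R : ((N-1:ℕ):ℝ) = (N:ℝ) - 1 := by
      rw [Nat.cast_sub (by omega)]; norm_num
    have haPos : (0:ℝ) < ((N/2+1:ℕ):ℝ) := by exact_mod_cast Nat.succ_pos (N/2)
    have hacR : ((N/2+1:ℕ):ℝ) ≤ ((3*N/4:ℕ):ℝ) := Nat.cast_le.2 hac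
    have hc1R' : ((3*N/4+1:ℕ):ℝ) ≤ ((N-1:ℕ):ℝ) := Nat.cast_le.2 hc1N1
    have hcltNR : ((3*N/4:ℕ):ℝ) < (N:ℝ) := by exact_mod_cast hcltN
    have hN1ltN : ((N-1:ℕ):ℝ) < (N:ℝ) := by exact_mod_cast (by omega : N-1 < N)
    have hc1Pos : (0:ℝ) < ((3*N/4+1:ℕ):ℝ) := by exact_mod_cast Nat.succ_pos _
    have hanti : AntitoneOn (rsFN N) (Set.Icc ((N/2+1:ℕ):ℝ) ((3*N/4:ℕ):ℝ)) := by
      intro x hx y hy hxy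
      apply rsFN_anti N (lt_of_lt_of_le haPos hx.1) hxy
      have hy2 : y ≤ 3*(N:ℝ)/4 := le_trans hy.2 hcR
      linarith
    have hmono : MonotoneOn (rsFN N) (Set.Icc ((3*N/4+1:ℕ):ℝ) ((N-1:ℕ):ℝ)) := by
      intro x hx y hy hxy
      apply rsFN_mono N ?_ hxy ?_
      · have e : ((3*N/4+1:ℕ):ℝ) = ((3*N/4:ℕ):ℝ) + 1 := by push_cast; ring
        have hx1 := hx.1
        rw [e] at hx1
        linarith
      · have hy2 := hy.2
        rw [hN1R] at hy2
        linarith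
    have hint1 : ∫ t in ((N/2+1:ℕ):ℝ)..((3*N/4:ℕ):ℝ), rsFN N t
        = rsHN N ((3*N/4:ℕ):ℝ) - rsHN N ((N/2+1:ℕ):ℝ) :=
      rs_integral N haPos hacR hcltNR
    have hint2 : ∫ t in ((3*N/4+1:ℕ):ℝ)..((N-1:ℕ):ℝ), rsFN N t
        = rsHN N ((N-1:ℕ):ℝ) - rsHN N ((3*N/4+1:ℕ):ℝ) :=
      rs_integral N hc1Pos hc1R' hN1ltN
    have low1 := AntitoneOn.integral_le_sum_Ico hac hanti
    have up1a := AntitoneOn.sum_le_integral_Ico hac hanti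
    have low2 := MonotoneOn.integral_le_sum_Ico hc1N1 hmono
    have up2 := MonotoneOn.sum_le_integral_Ico hc1N1 hmono
    have shift1 : (∑ i ∈ Finset.Ico (N/2+1) (3*N/4), rsFN N ((i+1:ℕ):ℝ))
        = ∑ i ∈ Finset.Ico (N/2+2) (3*N/4+1), rsFN N (i:ℝ) := by
      have hs := Finset.sum_Ico_add' (fun i : ℕ => rsFN N (i:ℝ)) (N/2+1) (3*N/4) 1
      simpa using hs
    have split1 : (∑ i ∈ Finset.Ico (N/2+2) (3*N/4+1), rsFN N (i:ℝ))
        = (∑ i ∈ Finset.Ico (N/2+2) (3*N/4), rsFN N (i:ℝ)) + rsFN N ((3*N/4:ℕ):ℝ) :=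
      Finset.sum_Ico_succ_top ha2c _
    have split2 : (∑ i ∈ Finset.Ico (N/2+1) (3*N/4), rsFN N (i:ℝ))
        = rsFN N ((N/2+1:ℕ):ℝ) + ∑ i ∈ Finset.Ico (N/2+2) (3*N/4), rsFN N (i:ℝ) :=
      Finset.sum_eq_sum_Ico_succ_bot hacLT _
    have up1 : (∑ i ∈ Finset.Ico (N/2+1) (3*N/4), rsFN N (i:ℝ))
        ≤ rsFN N ((N/2+1:ℕ):ℝ) + ∫ t in ((N/2+1:ℕ):ℝ)..((3*N/4:ℕ):ℝ), rsFN N t := by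
      have hmid : (∑ i ∈ Finset.Ico (N/2+2) (3*N/4), rsFN N (i:ℝ))
          ≤ ∫ t in ((N/2+1:ℕ):ℝ)..((3*N/4:ℕ):ℝ), rsFN N t := by
        calc (∑ i ∈ Finset.Ico (N/2+2) (3*N/4), rsFN N (i:ℝ))
            ≤ ∑ i ∈ Finset.Ico (N/2+2) (3*N/4+1), rsFN N (i:ℝ) := by
              rw [split1]; linarith [rsFN_nonneg N ((3*N/4:ℕ):ℝ)]
        _ = ∑ i ∈ Finset.Ico (N/2+1) (3*N/4), rsFN N ((i+1:ℕ):ℝ) := shift1.symm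
        _ ≤ _ := up1a
      rw [split2]
      linarith
    have shift2 : (∑ i ∈ Finset.Ico (3*N/4+1) (N-1), rsFN N ((i+1:ℕ):ℝ))
        = ∑ i ∈ Finset.Ico (3*N/4+2) N, rsFN N (i:ℝ) := by
      have hs := Finset.sum_Ico_add' (fun i : ℕ => rsFN N (i:ℝ)) (3*N/4+1) (N-1) 1
      rw [hN11] at hs
      simpa using hs
    have splitc : (∑ i ∈ Finset.Ico (3*N/4+1) N, rsFN N (i:ℝ))
        = rsFN N ((3*N/4+1:ℕ):ℝ) + ∑ i ∈ Finset.Ico (3*N/4+2) N, rsFN N (i:ℝ) :=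
      Finset.sum_eq_sum_Ico_succ_bot (by omega) _
    have splitTop : (∑ i ∈ Finset.Ico (3*N/4+1) N, rsFN N (i:ℝ))
        = (∑ i ∈ Finset.Ico (3*N/4+1) (N-1), rsFN N (i:ℝ)) + rsFN N ((N-1:ℕ):ℝ) := by
      have hs := Finset.sum_Ico_succ_top hc1N1 (fun i : ℕ => rsFN N (i:ℝ))
      rw [hN11] at hs
      exact hs
    have low3 : (∫ t in ((3*N/4+1:ℕ):ℝ)..((N-1:ℕ):ℝ), rsFN N t)
        ≤ ∑ i ∈ Finset.Ico (3*N/4+1) N, rsFN N (i:ℝ) := by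
      calc (∫ t in ((3*N/4+1:ℕ):ℝ)..((N-1:ℕ):ℝ), rsFN N t)
          ≤ ∑ i ∈ Finset.Ico (3*N/4+1) (N-1), rsFN N ((i+1:ℕ):ℝ) := low2
      _ = ∑ i ∈ Finset.Ico (3*N/4+2) N, rsFN N (i:ℝ) := shift2
      _ ≤ ∑ i ∈ Finset.Ico (3*N/4+1) N, rsFN N (i:ℝ) := by
          rw [splitc]; linarith [rsFN_nonneg N ((3*N/4+1:ℕ):ℝ)]
    have up3 : (∑ i ∈ Finset.Ico (3*N/4+1) N, rsFN N (i:ℝ))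
        ≤ (∫ t in ((3*N/4+1:ℕ):ℝ)..((N-1:ℕ):ℝ), rsFN N t) + rsFN N ((N-1:ℕ):ℝ) := by
      rw [splitTop]
      linarith [up2]
    have hdecomp : (∑ n ∈ Finset.Ico (N/2+1) N, rsFN N (n:ℝ))
        = (∑ i ∈ Finset.Ico (N/2+1) (3*N/4), rsFN N (i:ℝ))
          + ∑ i ∈ Finset.Ico (3*N/4) N, rsFN N (i:ℝ) :=
      (Finset.sum_Ico_consecutive _ hac hcN).symm
    have hdecomp2 : (∑ i ∈ Finset.Ico (3*N/4) N, rsFN N (i:ℝ))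
        = rsFN N ((3*N/4:ℕ):ℝ) + ∑ i ∈ Finset.Ico (3*N/4+1) N, rsFN N (i:ℝ) :=
      Finset.sum_eq_sum_Ico_succ_bot hcltN _
    have eb1 : rsFN N ((N/2+1:ℕ):ℝ) ≤ 8/(N:ℝ) := rsFN_bound N haR haR2 (by omega)
    have eb2 : rsFN N ((3*N/4:ℕ):ℝ) ≤ 8/(N:ℝ) := rsFN_bound N hcR1 hcR2 (by omega)
    have eb3 : rsFN N ((N-1:ℕ):ℝ) ≤ 2/Real.sqrt ((N:ℝ)-1) := rsFN_last N (by omega)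
    constructor
    · rw [hdecomp, hdecomp2, ← hint1, ← hint2]
      linarith [low1, low3, rsFN_nonneg N ((3*N/4:ℕ):ℝ)]
    · rw [hdecomp, hdecomp2, ← hint1, ← hint2]
      linarith [up1, up3]
  exact tendsto_of_tendsto_of_tendsto_of_le_of_le' hLB hUB
    (key.mono fun N h => h.1) (key.mono fun N h => h.2)
end
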